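/- Let G = (V,E) be a graph without isolated vertices, with V linearly ordered. Call N_G[v] \ {v} a broken neighbourhood if v = max N_G[v]. Then for any set 𝒳 of broken neighbourhoods of G, DRel(G, p) = Σ (-1)^{|J|} ∏_{v∈N_G[J]} q_v, where the sum is over all J ⊆ V not containing any member of 𝒳 as a subset. -/

import Mathlib

open scoped Classical
open Finset

/-- The closed neighbourhood of a finite set of vertices `J` in `G`. -/
noncomputable def closedNbhd {V : Type*} [Fintype V] (G : SimpleGraph V) (J : Finset V) :
    Finset V :=
  Finset.univ.filter (fun v => v ∈ J ∨ ∃ j ∈ J, G.Adj j v)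

/-- `X` is a dominating set of `G`. -/
def IsDominating {V : Type*} (G : SimpleGraph V) (X : Finset V) : Prop :=
  ∀ v, v ∈ X ∨ ∃ x ∈ X, G.Adj x v

/-- Domination reliability: probability that the random set of operating vertices
(vertex `v` operating independently with probability `p v`) is a dominating set. -/
noncomputable def DRel {V : Type*} [Fintype V] (G : SimpleGraph V) (p : V → ℝ) : ℝ :=
  ∑ X ∈ Finset.univ.filter (fun X : Finset V => IsDominating G X),
    (∏ v ∈ X, p v) * ∏ v ∈ Xᶜ, (1 - p v)

/-- `X` is a broken neighbourhood of `G` (w.r.t. the linear order on the vertices):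
`X = N_G[v] \ {v}` for some vertex `v` which is the maximum of its closed neighbourhood. -/
def IsBrokenNbhd {V : Type*} [Fintype V] [LinearOrder V] (G : SimpleGraph V)
    (X : Finset V) : Prop :=
  ∃ v : V, X = closedNbhd G {v} \ {v} ∧ ∀ w ∈ closedNbhd G {v}, w ≤ v

section Aux

variable {V : Type*} [Fintype V] [DecidableEq V] (G : SimpleGraph V)

lemma mem_closedNbhd' {J : Finset V} {u : V} :
    u ∈ closedNbhd G J ↔ u ∈ J ∨ ∃ j ∈ J, G.Adj j u := by
  simp [closedNbhd]

lemma mem_brokenSet {v u : V} :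
    u ∈ closedNbhd G {v} \ {v} ↔ G.Adj v u := by
  simp only [mem_sdiff, mem_closedNbhd', mem_singleton]
  constructor
  · rintro ⟨(rfl | ⟨j, rfl, hj⟩), hne⟩
    · exact absurd rfl hne
    · exact hj
  · intro h
    exact ⟨Or.inr ⟨v, rfl, h⟩, fun e => G.irrefl (e ▸ h)⟩

lemma closedNbhd_insert_eq (v : V) (K : Finset V) (hv : ∃ w, G.Adj v w)
    (hB : closedNbhd G {v} \ {v} ⊆ K) :
    closedNbhd G (insert v K) = closedNbhd G K := by
  have hnb : ∀ u, G.Adj v u → u ∈ K := fun u hu => hB ((mem_brokenSet G).2 hu)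
  ext u
  simp only [mem_closedNbhd', mem_insert]
  constructor
  · rintro ((rfl | hu) | ⟨j, (rfl | hj), hadj⟩)
    · obtain ⟨w, hw⟩ := hv
      exact Or.inr ⟨w, hnb w hw, hw.symm⟩
    · exact Or.inl hu
    · exact Or.inl (hnb u hadj)
    · exact Or.inr ⟨j, hj, hadj⟩
  · rintro (hu | ⟨j, hj, hadj⟩)
    · exact Or.inl (Or.inr hu)
    · exact Or.inr ⟨j, Or.inr hj, hadj⟩

/-- The set of vertices not dominated by `X`. -/
noncomputable def undomSet (X : Finset V) : Finset V :=
  Finset.univ.filter (fun v => v ∉ X ∧ ∀ x ∈ X, ¬ G.Adj x v)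

lemma undomSet_eq_empty_iff {X : Finset V} :
    undomSet G X = ∅ ↔ IsDominating G X := by
  simp only [undomSet, eq_empty_iff_forall_notMem, mem_filter, mem_univ, true_and,
    IsDominating, not_and, not_forall]
  constructor
  · intro h v
    by_cases hvX : v ∈ X
    · exact Or.inl hvX
    · obtain ⟨x, hx, hadj⟩ := h v hvX
      exact Or.inr ⟨x, hx, not_not.1 hadj⟩
  · intro h v hvX
    rcases h v with hv | ⟨x, hx, hadj⟩
    · exact absurd hv hvX
    · exact ⟨x, hx, not_not.2 hadj⟩

lemma powerset_compl_closedNbhd_mem_iff {J X : Finset V} :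
    X ∈ ((closedNbhd G J)ᶜ).powerset ↔ J ∈ (undomSet G X).powerset := by
  simp only [mem_powerset, subset_iff, mem_compl, mem_closedNbhd', undomSet, mem_filter,
    mem_univ, true_and, not_or, not_exists, not_and]
  constructor
  · intro h j hj
    constructor
    · intro hjX
      exact (h hjX).1 hj
    · intro x hx hadj
      exact (h hx).2 j hj hadj.symm
  · intro h x hx
    constructor
    · intro hxJ
      exact (h hxJ).1 hx
    · intro j hj hadj
      exact (h hj).2 x hx hadj.symm

variable (p : V → ℝ)

lemma prod_closedNbhd_eq_sum (J : Finset V) :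
    ∏ v ∈ closedNbhd G J, (1 - p v)
      = ∑ X ∈ ((closedNbhd G J)ᶜ).powerset, (∏ v ∈ X, p v) * ∏ v ∈ Xᶜ, (1 - p v) := by
  set s := (closedNbhd G J)ᶜ with hs
  have h1 : ∀ X ∈ s.powerset, (∏ v ∈ X, p v) * ∏ v ∈ Xᶜ, (1 - p v)
      = (∏ v ∈ closedNbhd G J, (1 - p v)) *
        ((∏ v ∈ X, p v) * ∏ v ∈ s \ X, (1 - p v)) := by
    intro X hX
    rw [mem_powerset] at hX
    have hmem : ∀ u ∈ X, u ∉ closedNbhd G J := by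
      intro u hu
      have := hX hu
      rwa [hs, mem_compl] at this
    have hXc : Xᶜ = closedNbhd G J ∪ (s \ X) := by
      ext u
      simp only [mem_compl, mem_union, mem_sdiff, hs]
      by_cases hu : u ∈ closedNbhd G J
      · simp only [hu, true_or, iff_true]
        exact fun hx => hmem u hx hu
      · simp only [hu, false_or, not_false_iff, true_and]
    have hdis : Disjoint (closedNbhd G J) (s \ X) :=
      Disjoint.mono_right sdiff_subset (by rw [hs]; exact disjoint_compl_right)
    rw [hXc, prod_union hdis]
    ring
  rw [Finset.sum_congr rfl h1, ← Finset.mul_sum, ← Finset.prod_add]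
  have : ∀ v ∈ s, p v + (1 - p v) = 1 := fun v _ => by ring
  rw [Finset.prod_congr rfl this, prod_const_one, mul_one]

lemma sum_powerset_neg_one_pow_card_real (s : Finset V) :
    ∑ J ∈ s.powerset, (-1 : ℝ) ^ J.card = if s = ∅ then 1 else 0 := by
  have h := Finset.sum_powerset_neg_one_pow_card (x := s)
  have h2 : ((∑ J ∈ s.powerset, (-1 : ℤ) ^ J.card : ℤ) : ℝ)
      = ∑ J ∈ s.powerset, (-1 : ℝ) ^ J.card := by push_cast; rfl
  rw [← h2, h]
  split_ifs <;> simp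

lemma drel_eq_sum_univ :
    DRel G p = ∑ J : Finset V, (-1 : ℝ) ^ J.card * ∏ v ∈ closedNbhd G J, (1 - p v) := by
  have key : ∀ J : Finset V,
      (-1 : ℝ) ^ J.card * ∏ v ∈ closedNbhd G J, (1 - p v)
      = ∑ X : Finset V, (if J ∈ (undomSet G X).powerset
          then (-1 : ℝ) ^ J.card * ((∏ v ∈ X, p v) * ∏ v ∈ Xᶜ, (1 - p v)) else 0) := by
    intro J
    rw [prod_closedNbhd_eq_sum G p J, Finset.mul_sum]
    have hps : ((closedNbhd G J)ᶜ).powerset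
        = Finset.univ.filter (fun X : Finset V => J ∈ (undomSet G X).powerset) := by
      ext X
      simp only [mem_filter, mem_univ, true_and]
      exact powerset_compl_closedNbhd_mem_iff G
    rw [hps, Finset.sum_filter]
  calc DRel G p
      = ∑ X ∈ Finset.univ.filter (fun X : Finset V => IsDominating G X),
          (∏ v ∈ X, p v) * ∏ v ∈ Xᶜ, (1 - p v) := by unfold DRel; congr!
    _ = ∑ X : Finset V, (if undomSet G X = ∅ then 1 else 0) *
          ((∏ v ∈ X, p v) * ∏ v ∈ Xᶜ, (1 - p v)) := by
        rw [Finset.sum_filter]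
        refine Finset.sum_congr rfl fun X _ => ?_
        rw [ite_mul, one_mul, zero_mul]
        congr 1
        · simp [undomSet_eq_empty_iff]
    _ = ∑ X : Finset V, (∑ J ∈ (undomSet G X).powerset, (-1 : ℝ) ^ J.card) *
          ((∏ v ∈ X, p v) * ∏ v ∈ Xᶜ, (1 - p v)) := by
        refine Finset.sum_congr rfl fun X _ => ?_
        rw [sum_powerset_neg_one_pow_card_real]
    _ = ∑ X : Finset V, ∑ J : Finset V, (if J ∈ (undomSet G X).powerset
          then (-1 : ℝ) ^ J.card * ((∏ v ∈ X, p v) * ∏ v ∈ Xᶜ, (1 - p v)) else 0) := by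
        refine Finset.sum_congr rfl fun X _ => ?_
        rw [Finset.sum_mul]
        have : (undomSet G X).powerset
            = Finset.univ.filter (fun J : Finset V => J ∈ (undomSet G X).powerset) := by
          ext J; simp
        rw [this, Finset.sum_filter]
        exact Finset.sum_congr rfl fun J _ => by simp
    _ = ∑ J : Finset V, ∑ X : Finset V, (if J ∈ (undomSet G X).powerset
          then (-1 : ℝ) ^ J.card * ((∏ v ∈ X, p v) * ∏ v ∈ Xᶜ, (1 - p v)) else 0) :=
        Finset.sum_comm
    _ = ∑ J : Finset V, (-1 : ℝ) ^ J.card * ∏ v ∈ closedNbhd G J, (1 - p v) := by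
        refine Finset.sum_congr rfl fun J _ => (key J).symm

end Aux

section Induction

variable {V : Type*} [Fintype V] [LinearOrder V] (G : SimpleGraph V)

lemma sum_avoid_eq_sum_univ (p : V → ℝ) (hiso : ∀ v : V, ∃ w, G.Adj v w)
    (𝒴 : Finset (Finset V)) (h𝒴 : ∀ X ∈ 𝒴, IsBrokenNbhd G X) :
    ∑ J ∈ Finset.univ.filter (fun J : Finset V => ∀ X ∈ 𝒴, ¬ X ⊆ J),
        (-1 : ℝ) ^ J.card * ∏ v ∈ closedNbhd G J, (1 - p v)
      = ∑ J : Finset V, (-1 : ℝ) ^ J.card * ∏ v ∈ closedNbhd G J, (1 - p v) := by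
  induction 𝒴 using Finset.strongInduction with
  | _ 𝒴 ih =>
  rcases 𝒴.eq_empty_or_nonempty with rfl | hne
  · simp
  · -- choose the broken neighbourhood with the largest witness vertex
    set S : Finset V := Finset.univ.filter (fun v : V =>
      (closedNbhd G {v} \ {v}) ∈ 𝒴 ∧ ∀ w ∈ closedNbhd G {v}, w ≤ v) with hS
    have hSne : S.Nonempty := by
      obtain ⟨X, hX⟩ := hne
      obtain ⟨v, rfl, hv⟩ := h𝒴 X hX
      exact ⟨v, by rw [hS, mem_filter]; exact ⟨mem_univ _, hX, hv⟩⟩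
    set v₀ : V := S.max' hSne with hv₀
    have hv₀S : v₀ ∈ S := S.max'_mem hSne
    rw [hS, mem_filter] at hv₀S
    set X₀ : Finset V := closedNbhd G {v₀} \ {v₀} with hX₀def
    have hX₀mem : X₀ ∈ 𝒴 := hv₀S.2.1
    have key : ∀ X ∈ 𝒴, v₀ ∉ X := by
      intro X hX hvX
      obtain ⟨w, rfl, hw⟩ := h𝒴 X hX
      have hwS : w ∈ S := by rw [hS, mem_filter]; exact ⟨mem_univ _, hX, hw⟩
      have h1 : w ≤ v₀ := S.le_max' w hwS
      have h2 : G.Adj w v₀ := (mem_brokenSet G).1 hvX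
      have h3 : v₀ ≤ w := hw v₀ (by
        rw [mem_closedNbhd']
        exact Or.inr ⟨w, mem_singleton_self w, h2⟩)
      exact G.irrefl ((le_antisymm h3 h1) ▸ h2)
    have hv₀X₀ : v₀ ∉ X₀ := key X₀ hX₀mem
    -- split the sum
    have hsplit : Finset.univ.filter (fun J : Finset V => ∀ X ∈ 𝒴.erase X₀, ¬ X ⊆ J)
        = (Finset.univ.filter (fun J : Finset V =>
            (∀ X ∈ 𝒴.erase X₀, ¬ X ⊆ J) ∧ X₀ ⊆ J)) ∪
          (Finset.univ.filter (fun J : Finset V => ∀ X ∈ 𝒴, ¬ X ⊆ J)) := by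
      ext J
      simp only [mem_filter, mem_univ, true_and, mem_union]
      constructor
      · intro h
        by_cases hsub : X₀ ⊆ J
        · exact Or.inl ⟨h, hsub⟩
        · refine Or.inr fun X hX => ?_
          rcases eq_or_ne X X₀ with rfl | hne'
          · exact hsub
          · exact h X (Finset.mem_erase.2 ⟨hne', hX⟩)
      · rintro (⟨h, _⟩ | h)
        · exact h
        · exact fun X hX => h X (Finset.mem_of_mem_erase hX)
    have hdisj : Disjoint
        (Finset.univ.filter (fun J : Finset V =>
            (∀ X ∈ 𝒴.erase X₀, ¬ X ⊆ J) ∧ X₀ ⊆ J))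
        (Finset.univ.filter (fun J : Finset V => ∀ X ∈ 𝒴, ¬ X ⊆ J)) := by
      rw [Finset.disjoint_left]
      intro J hJ₁ hJ₂
      rw [mem_filter] at hJ₁ hJ₂
      exact hJ₂.2 X₀ hX₀mem hJ₁.2.2
    -- the paired sum vanishes
    have hzero : ∑ J ∈ Finset.univ.filter (fun J : Finset V =>
          (∀ X ∈ 𝒴.erase X₀, ¬ X ⊆ J) ∧ X₀ ⊆ J),
        (-1 : ℝ) ^ J.card * ∏ v ∈ closedNbhd G J, (1 - p v) = 0 := by
      refine Finset.sum_involution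
        (fun J _ => if v₀ ∈ J then J.erase v₀ else insert v₀ J) ?_ ?_ ?_ ?_
      · -- terms cancel
        intro J hJ
        rw [mem_filter] at hJ
        have hX₀J : X₀ ⊆ J := hJ.2.2
        have hBsub : closedNbhd G {v₀} \ {v₀} ⊆ J.erase v₀ := by
          intro x hx
          exact Finset.mem_erase.2 ⟨fun e => hv₀X₀ (e ▸ hx), hX₀J hx⟩
        by_cases hv : v₀ ∈ J
        · simp only [hv, if_true]
          have hJeq : J = insert v₀ (J.erase v₀) := (Finset.insert_erase hv).symm
          have hN : closedNbhd G J = closedNbhd G (J.erase v₀) := by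
            conv_lhs => rw [hJeq]
            exact closedNbhd_insert_eq G v₀ (J.erase v₀) (hiso v₀) hBsub
          have hcard : J.card = (J.erase v₀).card + 1 :=
            (Finset.card_erase_add_one hv).symm
          rw [hN, hcard, pow_succ]
          ring
        · simp only [hv, if_false]
          have hBsub' : closedNbhd G {v₀} \ {v₀} ⊆ J := hX₀J
          have hN : closedNbhd G (insert v₀ J) = closedNbhd G J :=
            closedNbhd_insert_eq G v₀ J (hiso v₀) hBsub'
          have hcard : (insert v₀ J).card = J.card + 1 :=
            Finset.card_insert_of_notMem hv
          rw [hN, hcard, pow_succ]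
          ring
      · -- nontrivial
        intro J hJ _
        by_cases hv : v₀ ∈ J
        · simp only [hv, if_true]
          intro h
          exact (Finset.erase_eq_self.1 h) hv
        · simp only [hv, if_false]
          intro h
          exact hv (Finset.insert_eq_self.1 h)
      · -- membership
        intro J hJ
        rw [mem_filter] at hJ
        obtain ⟨-, havoid, hX₀J⟩ := hJ
        have hsubJ : ∀ x ∈ (if v₀ ∈ J then J.erase v₀ else insert v₀ J), x ≠ v₀ → x ∈ J := by
          intro x hx hxne
          by_cases hv : v₀ ∈ J
          · rw [if_pos hv] at hx; exact Finset.mem_of_mem_erase hx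
          · rw [if_neg hv] at hx
            rcases Finset.mem_insert.1 hx with rfl | h
            · exact absurd rfl hxne
            · exact h
        rw [mem_filter]
        refine ⟨Finset.mem_univ _, ?_, ?_⟩
        · intro X hX hsub
          refine havoid X hX fun x hx => ?_
          have hxne : x ≠ v₀ := fun e => key X (Finset.mem_of_mem_erase hX) (e ▸ hx)
          exact hsubJ x (hsub hx) hxne
        · intro x hx
          have hxne : x ≠ v₀ := fun e => hv₀X₀ (e ▸ hx)
          have hxJ : x ∈ J := hX₀J hx
          by_cases hv : v₀ ∈ J
          · rw [if_pos hv]; exact Finset.mem_erase.2 ⟨hxne, hxJ⟩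
          · rw [if_neg hv]; exact Finset.mem_insert_of_mem hxJ
      · -- involution
        intro J hJ
        by_cases hv : v₀ ∈ J
        · rw [if_pos hv, if_neg (Finset.notMem_erase v₀ J), Finset.insert_erase hv]
        · rw [if_neg hv, if_pos (Finset.mem_insert_self v₀ J), Finset.erase_insert hv]
    have herase : ∀ X ∈ 𝒴.erase X₀, IsBrokenNbhd G X :=
      fun X hX => h𝒴 X (Finset.mem_of_mem_erase hX)
    have hih := ih (𝒴.erase X₀) (Finset.erase_ssubset hX₀mem) herase
    calc ∑ J ∈ Finset.univ.filter (fun J : Finset V => ∀ X ∈ 𝒴, ¬ X ⊆ J),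
          (-1 : ℝ) ^ J.card * ∏ v ∈ closedNbhd G J, (1 - p v)
        = ∑ J ∈ Finset.univ.filter (fun J : Finset V => ∀ X ∈ 𝒴.erase X₀, ¬ X ⊆ J),
          (-1 : ℝ) ^ J.card * ∏ v ∈ closedNbhd G J, (1 - p v) := by
          rw [hsplit, Finset.sum_union hdisj, hzero, zero_add]
      _ = ∑ J : Finset V, (-1 : ℝ) ^ J.card * ∏ v ∈ closedNbhd G J, (1 - p v) := hih

end Induction

theorem drel_broken_nbhd {V : Type*} [Fintype V] [LinearOrder V] (G : SimpleGraph V)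
    (p : V → ℝ) (hp : ∀ v, p v ∈ Set.Icc (0 : ℝ) 1)
    (hiso : ∀ v : V, ∃ w, G.Adj v w)
    (𝒳 : Set (Finset V)) (h𝒳 : ∀ X ∈ 𝒳, IsBrokenNbhd G X) :
    DRel G p =
      ∑ J ∈ Finset.univ.filter (fun J : Finset V => ∀ X ∈ 𝒳, ¬ X ⊆ J),
        (-1 : ℝ) ^ J.card * ∏ v ∈ closedNbhd G J, (1 - p v) := by
  have hfin : 𝒳.Finite := Set.toFinite 𝒳
  have hfilter : Finset.univ.filter (fun J : Finset V => ∀ X ∈ 𝒳, ¬ X ⊆ J)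
      = Finset.univ.filter (fun J : Finset V => ∀ X ∈ hfin.toFinset, ¬ X ⊆ J) := by
    ext J
    simp [Set.Finite.mem_toFinset]
  rw [hfilter, sum_avoid_eq_sum_univ G p hiso hfin.toFinset
    (fun X hX => h𝒳 X (hfin.mem_toFinset.1 hX))]
  exact drel_eq_sum_univ G p
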